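/- arXiv:2501.11731 — 4 statements merged into one kernel-verified Lean document; each statement's English description precedes it below -/
import Mathlib

section
/- Fix n ≥ 1 and a prime power q, and for 1 ≤ i < j ≤ n let J_{i,j} = {(k,l) : 1 ≤ k < l ≤ n, and either k > i, or k = i and l ≥ j}. Let H = U_{J_{i,j}} and let H' = U_{J'} where J' = J_{i,j} \ {(i,j)} (both J_{i,j} and J' are closed, and U_∅ is the trivial group). Then q^{-1} ≤ k(H)/k(H') ≤ q^3; that is, k(H') ≤ q·k(H) and k(H) ≤ q^3·k(H'). -/
/-- The pattern set: `n×n` matrices over `F` with ones on the diagonal, zeros below the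
diagonal, and zeros in every above-diagonal position outside `J`. -/
def patternSet (n : ℕ) (F : Type) [Field F] (J : Set (Fin n × Fin n)) :
    Set (Matrix (Fin n) (Fin n) F) :=
  {u | (∀ i, u i i = 1) ∧ (∀ i j : Fin n, j < i → u i j = 0) ∧
    (∀ i j : Fin n, i < j → (i, j) ∉ J → u i j = 0)}

/-- The set `J_{i,j} = {(k,l) : k < l, and either k > i, or k = i and l ≥ j}`. -/
def Jset (n : ℕ) (i j : Fin n) : Set (Fin n × Fin n) :=
  {p | p.1 < p.2 ∧ (i < p.1 ∨ (p.1 = i ∧ j ≤ p.2))}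


set_option linter.unusedSectionVars false

open Subgroup

section Abstract

variable {G : Type} [Group G] [Finite G]

lemma myNatCardSigma {ι : Type*} [Fintype ι] (f : ι → Type*) [∀ i, Finite (f i)] :
    Nat.card (Sigma f) = ∑ i, Nat.card (f i) := by
  letI := fun i => Fintype.ofFinite (f i)
  simp [Nat.card_eq_fintype_card, Fintype.card_sigma]

lemma pointwise_bound (K : Subgroup G) (g : G) :
    Nat.card {h : G // Commute g h} ≤ K.index * Nat.card {k : K // Commute g (k : G)} := by
  set C := Subgroup.centralizer ({g} : Set G) with hC
  have memC : ∀ h : G, h ∈ C ↔ Commute g h := fun h => by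
    simp [hC, Subgroup.mem_centralizer_iff, Commute, SemiconjBy]
  have e1 : {h : G // Commute g h} ≃ C := Equiv.subtypeEquivRight fun h => (memC h).symm
  have e2 : {k : K // Commute g (k : G)} ≃ K.subgroupOf C :=
    { toFun := fun x => ⟨⟨(x.1 : G), (memC _).2 x.2⟩, x.1.2⟩
      invFun := fun y => ⟨⟨(y.1 : G), y.2⟩, (memC _).1 y.1.2⟩
      left_inv := fun x => rfl
      right_inv := fun y => rfl }
  rw [Nat.card_congr e1, Nat.card_congr e2]
  have hLag : (K.subgroupOf C).index * Nat.card (K.subgroupOf C) = Nat.card C :=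
    Subgroup.index_mul_card _
  have hrel : (K.subgroupOf C).index ≤ K.index := by
    have h1 : K.relIndex C ≤ K.relIndex ⊤ := by
      refine Subgroup.relIndex_le_of_le_right le_top ?_
      rw [Subgroup.relIndex_top_right]
      exact Subgroup.index_ne_zero_of_finite
    rw [Subgroup.relIndex_top_right] at h1
    exact h1
  calc Nat.card C = (K.subgroupOf C).index * Nat.card (K.subgroupOf C) := hLag.symm
    _ ≤ K.index * Nat.card (K.subgroupOf C) := Nat.mul_le_mul_right _ hrel

lemma key_ineq (K : Subgroup G) :
    Nat.card (ConjClasses G) ≤ K.index * Nat.card (ConjClasses K) ∧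
    Nat.card (ConjClasses K) ≤ K.index * Nat.card (ConjClasses G) := by
  classical
  letI : Fintype G := Fintype.ofFinite G
  letI : Fintype K := Fintype.ofFinite K
  set m := K.index with hm
  set S1 := Nat.card {p : G × G // Commute p.1 p.2} with hS1
  set S2 := Nat.card {p : G × K // Commute p.1 (p.2 : G)} with hS2
  set S3 := Nat.card {p : K × K // Commute p.1 p.2} with hS3
  have hcoe : ∀ p : K × K, Commute (p.1 : G) (p.2 : G) ↔ Commute p.1 p.2 := fun p => by
    constructor
    · intro h; exact Subtype.ext h
    · intro h; exact congrArg Subtype.val h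
  have hA : S1 ≤ m * S2 := by
    have e : {p : G × G // Commute p.1 p.2} ≃ Σ g : G, {h : G // Commute g h} :=
      Equiv.subtypeProdEquivSigmaSubtype (fun (g h : G) => Commute g h)
    have e2 : {p : G × K // Commute p.1 (p.2 : G)} ≃ Σ g : G, {k : K // Commute g (k : G)} :=
      Equiv.subtypeProdEquivSigmaSubtype (fun (g : G) (k : K) => Commute g (k : G))
    rw [hS1, hS2, Nat.card_congr e, Nat.card_congr e2, myNatCardSigma, myNatCardSigma,
      Finset.mul_sum]
    exact Finset.sum_le_sum fun g _ => pointwise_bound K g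
  have hB : S2 ≤ m * S3 := by
    have e : {p : G × K // Commute p.1 (p.2 : G)} ≃ Σ k : K, {h : G // Commute (k : G) h} :=
      { toFun := fun x => ⟨x.1.2, x.1.1, x.2.symm⟩
        invFun := fun y => ⟨(y.2.1, y.1), y.2.2.symm⟩
        left_inv := fun x => rfl
        right_inv := fun y => rfl }
    have e2 : {p : K × K // Commute p.1 p.2} ≃ Σ k : K, {k' : K // Commute (k : G) (k' : G)} :=
      { toFun := fun x => ⟨x.1.1, x.1.2, (hcoe x.1).2 x.2⟩
        invFun := fun y => ⟨(y.1, y.2.1), (hcoe (y.1, y.2.1)).1 y.2.2⟩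
        left_inv := fun x => rfl
        right_inv := fun y => rfl }
    rw [hS2, hS3, Nat.card_congr e, Nat.card_congr e2, myNatCardSigma, myNatCardSigma,
      Finset.mul_sum]
    exact Finset.sum_le_sum fun k _ => pointwise_bound K (k : G)
  have hCc : S3 ≤ S1 := by
    have inj : Function.Injective
        (fun x : {p : K × K // Commute p.1 p.2} =>
          (⟨((x.1.1 : G), (x.1.2 : G)), (hcoe x.1).2 x.2⟩ : {p : G × G // Commute p.1 p.2})) := by
      intro a b hab
      apply Subtype.ext
      have h1 := congrArg (fun z => z.1.1) hab
      have h2 := congrArg (fun z => z.1.2) hab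
      exact Prod.ext (Subtype.ext h1) (Subtype.ext h2)
    exact Nat.card_le_card_of_injective _ inj
  have burnG : S1 = Nat.card (ConjClasses G) * Nat.card G :=
    card_comm_eq_card_conjClasses_mul_card G
  have burnK : S3 = Nat.card (ConjClasses K) * Nat.card K :=
    card_comm_eq_card_conjClasses_mul_card K
  have hGK : Nat.card G = m * Nat.card K := (Subgroup.index_mul_card K).symm
  have hKpos : 0 < Nat.card K := Nat.card_pos
  have hmpos : 0 < m := Nat.pos_of_ne_zero Subgroup.index_ne_zero_of_finite
  constructor
  · -- k(G) ≤ m * k(K)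
    have chain : Nat.card (ConjClasses G) * Nat.card G ≤ m * (m * (Nat.card (ConjClasses K) * Nat.card K)) := by
      calc Nat.card (ConjClasses G) * Nat.card G = S1 := burnG.symm
        _ ≤ m * S2 := hA
        _ ≤ m * (m * S3) := Nat.mul_le_mul_left _ hB
        _ = m * (m * (Nat.card (ConjClasses K) * Nat.card K)) := by rw [burnK]
    rw [hGK] at chain
    have : Nat.card (ConjClasses G) * (m * Nat.card K) ≤ (m * Nat.card (ConjClasses K)) * (m * Nat.card K) := by
      calc Nat.card (ConjClasses G) * (m * Nat.card K)
          ≤ m * (m * (Nat.card (ConjClasses K) * Nat.card K)) := chain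
        _ = (m * Nat.card (ConjClasses K)) * (m * Nat.card K) := by ring
    exact Nat.le_of_mul_le_mul_right this (Nat.mul_pos hmpos hKpos)
  · -- k(K) ≤ m * k(G)
    have chain : Nat.card (ConjClasses K) * Nat.card K ≤ m * Nat.card (ConjClasses G) * Nat.card K := by
      calc Nat.card (ConjClasses K) * Nat.card K = S3 := burnK.symm
        _ ≤ S1 := hCc
        _ = Nat.card (ConjClasses G) * Nat.card G := burnG
        _ = Nat.card (ConjClasses G) * (m * Nat.card K) := by rw [hGK]
        _ = m * Nat.card (ConjClasses G) * Nat.card K := by ring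
    exact Nat.le_of_mul_le_mul_right chain hKpos

end Abstract


lemma conjCard_congr {A B : Type*} [Group A] [Group B] (e : A ≃* B) :
    Nat.card (ConjClasses A) = Nat.card (ConjClasses B) :=
  Nat.card_congr (Quotient.congr e.toEquiv fun a b => by
    change IsConj a b ↔ IsConj (e a) (e b)
    constructor
    · exact fun h => e.toMonoidHom.map_isConj h
    · intro h
      have h2 := e.symm.toMonoidHom.map_isConj h
      simpa using h2)

section App

variable (n : ℕ) (F : Type) [Field F] [Fintype F] (i j : Fin n)

lemma entry_add (hij : i < j) {A B : Matrix (Fin n) (Fin n) F}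
    (hA : A ∈ patternSet n F (Jset n i j)) (hB : B ∈ patternSet n F (Jset n i j)) :
    (A * B) i j = A i j + B i j := by
  obtain ⟨hA1, hA2, hA3⟩ := hA
  obtain ⟨hB1, hB2, hB3⟩ := hB
  have hne : i ≠ j := ne_of_lt hij
  rw [Matrix.mul_apply]
  have hfun : ∀ k : Fin n, A i k * B k j =
      (if k = i then B i j else 0) + (if k = j then A i j else 0) := by
    intro k
    by_cases hki : k = i
    · subst hki
      simp [hA1, if_neg hne]
    · by_cases hkj : k = j
      · subst hkj
        simp [hB1, hki]
      · rw [if_neg hki, if_neg hkj, add_zero]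
        rcases lt_trichotomy k i with hlt | heq | hgt
        · rw [hA2 i k hlt, zero_mul]
        · exact absurd heq hki
        · rcases lt_trichotomy k j with hlt2 | heq2 | hgt2
          · have : (i, k) ∉ Jset n i j := by
              intro hmem
              rcases hmem.2 with h | h
              · exact lt_irrefl i h
              · exact absurd h.2 (not_le.2 hlt2)
            rw [hA3 i k hgt this, zero_mul]
          · exact absurd heq2 hkj
          · rw [hB2 k j hgt2, mul_zero]
  rw [Finset.sum_congr rfl (fun k _ => hfun k)]
  rw [Finset.sum_add_distrib]
  simp [add_comm]

variable (H H' : Subgroup (GL (Fin n) F))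
  (hH : ∀ g : GL (Fin n) F, g ∈ H ↔
      (g : Matrix (Fin n) (Fin n) F) ∈ patternSet n F (Jset n i j))
  (hH' : ∀ g : GL (Fin n) F, g ∈ H' ↔
      (g : Matrix (Fin n) (Fin n) F) ∈ patternSet n F (Jset n i j \ {(i, j)}))

include hH hH' in
lemma mem_H'_iff (hij : i < j) (g : GL (Fin n) F) (hg : g ∈ H) :
    g ∈ H' ↔ (g : Matrix (Fin n) (Fin n) F) i j = 0 := by
  rw [hH'] at *
  rw [hH] at hg
  obtain ⟨h1, h2, h3⟩ := hg
  constructor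
  · intro ⟨_, _, h3'⟩
    exact h3' i j hij (by simp)
  · intro h0
    refine ⟨h1, h2, fun k l hkl hmem => ?_⟩
    by_cases hJ : (k, l) ∈ Jset n i j
    · have : (k, l) = (i, j) := by
        by_contra hne
        exact hmem ⟨hJ, hne⟩
      simp only [Prod.mk.injEq] at this
      rw [this.1, this.2]
      exact h0
    · exact h3 k l hkl hJ

include hH hH' in
lemma H'_le_H : H' ≤ H := by
  intro g hg
  rw [hH'] at hg
  rw [hH]
  obtain ⟨h1, h2, h3⟩ := hg
  exact ⟨h1, h2, fun k l hkl hmem => h3 k l hkl (fun hc => hmem hc.1)⟩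

include hH in
noncomputable def phi (hij : i < j) : H →* Multiplicative F where
  toFun u := Multiplicative.ofAdd (((u : GL (Fin n) F) : Matrix (Fin n) (Fin n) F) i j)
  map_one' := by
    have : ((1 : GL (Fin n) F) : Matrix (Fin n) (Fin n) F) i j = 0 := by
      simp [Matrix.one_apply, ne_of_lt hij]
    simp [this]
  map_mul' u v := by
    have hu := (hH u).1 u.2
    have hv := (hH v).1 v.2
    simp only [Subgroup.coe_mul, Units.val_mul]
    rw [entry_add n F i j hij hu hv, ofAdd_add]

include hH hH' in
lemma ker_phi (hij : i < j) : (phi n F i j H hH hij).ker = H'.subgroupOf H := by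
  ext u
  rw [MonoidHom.mem_ker, Subgroup.mem_subgroupOf,
    mem_H'_iff n F i j H H' hH hH' hij (u : GL (Fin n) F) u.2]
  constructor
  · intro h
    have := congrArg Multiplicative.toAdd h
    simpa [phi] using this
  · intro h
    exact congrArg Multiplicative.ofAdd h

end App


set_option maxHeartbeats 1000000 in
/-- Theorem 4.2: for the adjacent pattern groups `H = U_{J_{i,j}}` and
`H' = U_{J_{i,j} \ {(i,j)}}` in the nested chain, `q⁻¹ ≤ k(H)/k(H') ≤ q³`, i.e.
`k(H') ≤ q·k(H)` and `k(H) ≤ q³·k(H')`. -/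
theorem conj_class_ratio_adjacent_pattern_groups
    (n : ℕ) (hn : 1 ≤ n) (F : Type) [Field F] [Fintype F]
    (i j : Fin n) (hij : i < j)
    (H H' : Subgroup (GL (Fin n) F))
    (hH : ∀ g : GL (Fin n) F, g ∈ H ↔
      (g : Matrix (Fin n) (Fin n) F) ∈ patternSet n F (Jset n i j))
    (hH' : ∀ g : GL (Fin n) F, g ∈ H' ↔
      (g : Matrix (Fin n) (Fin n) F) ∈ patternSet n F (Jset n i j \ {(i, j)})) :
    Nat.card (ConjClasses H') ≤ Fintype.card F * Nat.card (ConjClasses H) ∧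
    Nat.card (ConjClasses H) ≤ (Fintype.card F) ^ 3 * Nat.card (ConjClasses H') := by
  have hfin : Finite (GL (Fin n) F) := by
    have : Finite (Matrix (Fin n) (Fin n) F) := by
      unfold Matrix
      infer_instance
    infer_instance
  set K := H'.subgroupOf H with hK
  have hidx : K.index ≤ Fintype.card F := by
    have h1 : (phi n F i j H hH hij).ker.index = Nat.card (phi n F i j H hH hij).range :=
      Subgroup.index_ker _
    rw [ker_phi n F i j H H' hH hH' hij] at h1
    rw [← hK] at h1
    rw [h1]
    have h2 : Nat.card (phi n F i j H hH hij).range ≤ Nat.card (Multiplicative F) :=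
      Nat.card_le_card_of_injective _ Subtype.val_injective
    have h3 : Nat.card (Multiplicative F) = Fintype.card F :=
      (Nat.card_congr Multiplicative.toAdd).trans Nat.card_eq_fintype_card
    omega
  have hkey := key_ineq K
  have hcongr : Nat.card (ConjClasses K) = Nat.card (ConjClasses H') :=
    conjCard_congr (Subgroup.subgroupOfEquivOfLe (H'_le_H n F i j H H' hH hH'))
  have hq1 : 1 ≤ Fintype.card F := Fintype.card_pos
  constructor
  · rw [← hcongr]
    calc Nat.card (ConjClasses K) ≤ K.index * Nat.card (ConjClasses H) := hkey.2
      _ ≤ Fintype.card F * Nat.card (ConjClasses H) := Nat.mul_le_mul_right _ hidx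
  · calc Nat.card (ConjClasses H) ≤ K.index * Nat.card (ConjClasses K) := hkey.1
      _ ≤ Fintype.card F * Nat.card (ConjClasses H') := by
          rw [hcongr]
          exact Nat.mul_le_mul_right _ hidx
      _ ≤ (Fintype.card F) ^ 3 * Nat.card (ConjClasses H') :=
          Nat.mul_le_mul_right _ (Nat.le_self_pow (by norm_num) _)
end

section
/- Fix n ≥ 1 and a prime power q, and for 1 ≤ i < j ≤ n let J_{i,j} = {(k,l) : 1 ≤ k < l ≤ n, and either k > i, or k = i and l ≥ j}. Let H = U_{J_{i,j}} and H' = U_{J'} with J' = J_{i,j} \ {(i,j)}. Let T be a random element of H with P(T = g) = 1/(k(H)·|O_H(g)|) for all g ∈ H, and let K(g) = |C_{H'}(g)|/|C_H(g)| for g ∈ H', K(g) = 0 for g ∈ H \ H'. Then the standard deviation of qK(T) satisfies sqrt(Var(qK(T))) ≤ q^2 · E[qK(T)] = q^2 · k(H')/k(H). Equivalently, writing E_r = Σ_{g ∈ H} (qK(g))^r / (k(H)·|O_H(g)|) for r = 1,2, one has E_2 − E_1^2 ≤ q^4 · E_1^2 and E_1 = k(H')/k(H). -/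
/- STATEMENT 3 (Corollary 4.3): with `H = U_{J_{i,j}}`, `H' = U_{J_{i,j} \ {(i,j)}}`,
`K(g) = |C_{H'}(g)|/|C_H(g)|` for `g ∈ H'` and `K(g) = 0` for `g ∈ H \ H'`, and
`E_r = Σ_{g ∈ H} (qK(g))^r / (k(H)·|O_H(g)|)`, one has
`Var(qK(T)) = E_2 − E_1² ≤ q⁴·E_1²` and `E_1 = E[qK(T)] = k(H')/k(H)`. -/
section Pattern
variable {n : ℕ} {F : Type} [Field F] {i j : Fin n} (hij : i < j)

/-- membership in the smaller pattern group implies membership in the larger one -/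
lemma pat_le {u : Matrix (Fin n) (Fin n) F}
    (hu : u ∈ patternSet n F (Jset n i j \ {(i, j)})) : u ∈ patternSet n F (Jset n i j) := by
  obtain ⟨h1, h2, h3⟩ := hu
  exact ⟨h1, h2, fun k l hkl hmem => h3 k l hkl (fun hc => hmem hc.1)⟩

include hij in
/-- for `u` in the big pattern set, membership in the small one is equivalent to the
`(i,j)` entry vanishing -/
lemma pat_mem_iff {u : Matrix (Fin n) (Fin n) F}
    (hu : u ∈ patternSet n F (Jset n i j)) :
    u ∈ patternSet n F (Jset n i j \ {(i, j)}) ↔ u i j = 0 := by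
  obtain ⟨h1, h2, h3⟩ := hu
  constructor
  · intro ⟨_, _, h3'⟩
    refine h3' i j hij ?_
    rintro ⟨-, hc⟩
    exact hc rfl
  · intro h0
    refine ⟨h1, h2, fun k l hkl hmem => ?_⟩
    by_cases hJ : (k, l) ∈ Jset n i j
    · have : (k, l) = (i, j) := by
        by_contra hne
        exact hmem ⟨hJ, hne⟩
      rw [Prod.mk.injEq] at this
      rw [this.1, this.2]; exact h0
    · exact h3 k l hkl hJ

include hij in
/-- the `(i,j)` entry is additive on the big pattern set -/
lemma pat_entry_add {u v : Matrix (Fin n) (Fin n) F}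
    (hu : u ∈ patternSet n F (Jset n i j)) (hv : v ∈ patternSet n F (Jset n i j)) :
    (u * v) i j = u i j + v i j := by
  obtain ⟨hu1, hu2, hu3⟩ := hu
  obtain ⟨hv1, hv2, hv3⟩ := hv
  rw [Matrix.mul_apply]
  rw [Finset.sum_eq_add_of_mem i j (Finset.mem_univ i) (Finset.mem_univ j) hij.ne
    ?_]
  · rw [hu1 i, hv1 j, one_mul, mul_one]
    exact add_comm _ _
  · intro k _ hk
    obtain ⟨hki, hkj⟩ := hk
    rcases lt_trichotomy k j with hlt | rfl | hgt
    · have : u i k = 0 := by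
        rcases lt_trichotomy k i with hlt' | rfl | hgt'
        · exact hu2 i k hlt'
        · exact absurd rfl hki
        · refine hu3 i k hgt' ?_
          rintro ⟨-, h | ⟨-, hle⟩⟩
          · exact absurd h (lt_irrefl i)
          · exact absurd hlt (not_lt.mpr hle)
      rw [this, zero_mul]
    · exact absurd rfl hkj
    · rw [hv2 k j hgt, mul_zero]

include hij in
/-- there is a matrix in the big pattern set, invertible, with arbitrary `(i,j)` entry -/
lemma pat_exists (t : F) :
    ∃ g : GL (Fin n) F, (g : Matrix (Fin n) (Fin n) F) ∈ patternSet n F (Jset n i j) ∧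
      (g : Matrix (Fin n) (Fin n) F) i j = t := by
  have hne : i ≠ j := hij.ne
  have key : ∀ s r : F, (1 + Matrix.single i j s) * (1 + Matrix.single i j r)
      = 1 + Matrix.single i j (s + r) := by
    intro s r
    rw [mul_add, mul_one, add_mul, one_mul, Matrix.single_mul_single_of_ne (i := i) (j := j) (k := i) (h := hij.ne') (c := s) (d := r),
      add_zero, Matrix.single_add, add_assoc]
  refine ⟨⟨1 + Matrix.single i j t, 1 + Matrix.single i j (-t), ?_, ?_⟩, ?_, ?_⟩
  · rw [key, add_neg_cancel, Matrix.single_zero, add_zero]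
  · rw [key, neg_add_cancel, Matrix.single_zero, add_zero]
  · refine ⟨fun k => ?_, fun k l hlk => ?_, fun k l hkl hmem => ?_⟩
    · show (1 + Matrix.single i j t) k k = 1
      rw [Matrix.add_apply, Matrix.one_apply_eq, Matrix.single_apply_of_ne i j t k k
        (by rintro ⟨rfl, rfl⟩; exact hne rfl), add_zero]
    · show (1 + Matrix.single i j t) k l = 0
      rw [Matrix.add_apply, Matrix.one_apply_ne (ne_of_gt hlk),
        Matrix.single_apply_of_ne i j t k l ?_, add_zero]
      rintro ⟨rfl, rfl⟩
      exact absurd hij (not_lt.mpr hlk.le)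
    · show (1 + Matrix.single i j t) k l = 0
      rw [Matrix.add_apply, Matrix.one_apply_ne (ne_of_lt hkl),
        Matrix.single_apply_of_ne i j t k l ?_, add_zero]
      rintro ⟨rfl, rfl⟩
      exact hmem ⟨hkl, Or.inr ⟨rfl, le_refl j⟩⟩
  · show (1 + Matrix.single i j t) i j = t
    rw [Matrix.add_apply, Matrix.one_apply_ne hne, Matrix.single_apply_same, zero_add]

end Pattern

open Finset
open scoped Classical
set_option linter.unusedSectionVars false

section GeneralGroup
variable (G : Type*) [Group G] [Fintype G]

private def myCentralizerEquiv (g : G) :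
    ↥(Subgroup.centralizer ({g} : Set G)) ≃ {h : G // Commute g h} :=
  Equiv.subtypeEquivRight fun a => by
    simp [Subgroup.mem_centralizer_iff, Commute, SemiconjBy]

private lemma mySumCommute :
    ∑ g : G, Nat.card {h : G // Commute g h}
      = Nat.card (ConjClasses G) * Nat.card G := by
  classical
  rw [← card_comm_eq_card_conjClasses_mul_card,
    Nat.card_congr (Equiv.subtypeProdEquivSigmaSubtype (fun a b : G => Commute a b)),
    Nat.card_eq_fintype_card, Fintype.card_sigma]
  simp [Nat.card_eq_fintype_card]

private lemma myBurnside :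
    ∑ g : G, Nat.card (Subgroup.centralizer ({g} : Set G))
      = Nat.card (ConjClasses G) * Nat.card G := by
  rw [← mySumCommute]
  exact Finset.sum_congr rfl fun g _ => Nat.card_congr (myCentralizerEquiv G g)

private lemma myOrbitCentralizer (g : G) :
    Nat.card (ConjClasses.mk g).carrier
      * Nat.card (Subgroup.centralizer ({g} : Set G)) = Nat.card G := by
  classical
  have h1 : Nat.card (ConjClasses.mk g).carrier
      = Nat.card (MulAction.orbit (ConjAct G) g) := by
    rw [ConjAct.orbit_eq_carrier_conjClasses]
  have h2 : Nat.card (Subgroup.centralizer ({g} : Set G))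
      = Nat.card (MulAction.stabilizer (ConjAct G) g) := by
    rw [Subgroup.centralizer_eq_comap_stabilizer]
    exact Nat.card_congr ((ConjAct.toConjAct (G := G)).toEquiv.subtypeEquiv fun x =>
      Iff.rfl)
  rw [h1, h2, Nat.card_eq_fintype_card, Nat.card_eq_fintype_card,
    MulAction.card_orbit_mul_card_stabilizer_eq_card_group (ConjAct G) g]
  exact (Nat.card_eq_fintype_card (α := ConjAct G)).symm.trans
    (Nat.card_congr ConjAct.ofConjAct.toEquiv)

variable {G}

private lemma myCardLeIndexMul (N : Subgroup G) [N.Normal] (g : G) :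
    Nat.card {h : G // Commute g h} ≤ N.index * Nat.card {x : ↥N // Commute g ↑x} := by
  classical
  set K := Subgroup.centralizer ({g} : Set G) with hK
  have e1 : {h : G // Commute g h} ≃ ↥K := (myCentralizerEquiv G g).symm
  have e2 : {x : ↥N // Commute g ↑x} ≃ ↥(N.subgroupOf K) := by
    refine ⟨fun x => ⟨⟨(x : G), ?_⟩, x.1.2⟩, fun y => ⟨⟨(y : K), y.2⟩, ?_⟩, ?_, ?_⟩
    · exact Subgroup.mem_centralizer_iff.mpr (by rintro b rfl; exact x.2)
    · have := (y : K).2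
      rw [Subgroup.mem_centralizer_iff] at this
      exact this g rfl
    · intro x; rfl
    · intro y; rfl
  rw [Nat.card_congr e1, Nat.card_congr e2]
  have h3 : Nat.card ↥K = Nat.card ↥(N.subgroupOf K) * (N.subgroupOf K).index :=
    (Subgroup.card_mul_index (N.subgroupOf K)).symm
  have h4 : (N.subgroupOf K).index ≤ N.index := by
    have hd : N.relIndex K ∣ N.index := Subgroup.relIndex_dvd_index_of_normal N K
    exact Nat.le_of_dvd (Nat.pos_of_ne_zero (Subgroup.index_ne_zero_of_finite)) hd
  calc Nat.card ↥K = Nat.card ↥(N.subgroupOf K) * (N.subgroupOf K).index := h3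
    _ ≤ Nat.card ↥(N.subgroupOf K) * N.index := Nat.mul_le_mul_left _ h4
    _ = N.index * Nat.card ↥(N.subgroupOf K) := Nat.mul_comm _ _

private lemma myDoubleCount (N : Subgroup G) :
    ∑ g : G, Nat.card {x : ↥N // Commute g ↑x}
      = ∑ x : ↥N, Nat.card {g : G // Commute (↑x : G) g} := by
  classical
  have hsym : ∀ (a b : G), Commute a b ↔ Commute b a :=
    fun a b => ⟨Commute.symm, Commute.symm⟩
  simp only [Nat.card_eq_fintype_card, Fintype.card_subtype]
  simp only [Finset.card_filter]
  rw [Finset.sum_comm]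
  refine Finset.sum_congr rfl fun x _ => Finset.sum_congr rfl fun g _ => ?_
  simp [hsym g x]

/-- Key general lemma: `k(G) ≤ [G:N]·k(N)`. -/
private lemma myClassBound (N : Subgroup G) [N.Normal] :
    Nat.card (ConjClasses G) ≤ N.index * Nat.card (ConjClasses ↥N) := by
  classical
  have hcomm : ∀ (x y : ↥N), Commute (↑x : G) ↑y ↔ Commute x y := by
    intro x y
    constructor
    · intro h; exact Subtype.ext h
    · intro h; exact congrArg Subtype.val h
  have main : Nat.card (ConjClasses G) * Nat.card G
      ≤ (N.index * Nat.card (ConjClasses ↥N)) * Nat.card G := by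
    calc Nat.card (ConjClasses G) * Nat.card G
        = ∑ g : G, Nat.card {h : G // Commute g h} := (mySumCommute G).symm
      _ ≤ ∑ g : G, N.index * Nat.card {x : ↥N // Commute g ↑x} :=
          Finset.sum_le_sum fun g _ => myCardLeIndexMul N g
      _ = N.index * ∑ g : G, Nat.card {x : ↥N // Commute g ↑x} := by
          rw [Finset.mul_sum]
      _ = N.index * ∑ x : ↥N, Nat.card {g : G // Commute (↑x : G) g} := by
          rw [myDoubleCount]
      _ ≤ N.index * ∑ x : ↥N, N.index * Nat.card {y : ↥N // Commute (↑x : G) ↑y} :=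
          Nat.mul_le_mul_left _ (Finset.sum_le_sum fun x _ => myCardLeIndexMul N ↑x)
      _ = N.index * (N.index * ∑ x : ↥N, Nat.card {y : ↥N // Commute x y}) := by
          rw [← Finset.mul_sum]
          congr 2
          exact Finset.sum_congr rfl fun x _ =>
            Nat.card_congr (Equiv.subtypeEquivRight fun y => hcomm x y)
      _ = N.index * (N.index * (Nat.card (ConjClasses ↥N) * Nat.card ↥N)) := by
          rw [mySumCommute]
      _ = (N.index * Nat.card (ConjClasses ↥N)) * (N.index * Nat.card ↥N) := by ring
      _ = (N.index * Nat.card (ConjClasses ↥N)) * Nat.card G := by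
          rw [Subgroup.index_mul_card]
  have hG : 0 < Nat.card G := Nat.card_pos
  exact Nat.le_of_mul_le_mul_right main hG

/-- conjugacy class count is invariant under `MulEquiv`. -/
private lemma myConjClassesCard {H : Type*} [Group H] (e : G ≃* H) :
    Nat.card (ConjClasses G) = Nat.card (ConjClasses H) := by
  refine Nat.card_congr ⟨ConjClasses.map e.toMonoidHom, ConjClasses.map e.symm.toMonoidHom,
    ?_, ?_⟩
  · intro c
    induction c using Quotient.inductionOn' with
    | h a => simp [ConjClasses.map, ← ConjClasses.quotient_mk_eq_mk]; rfl
  · intro c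
    induction c using Quotient.inductionOn' with
    | h a => simp [ConjClasses.map, ← ConjClasses.quotient_mk_eq_mk]; rfl

end GeneralGroup

set_option maxHeartbeats 1600000 in
open scoped Classical in
theorem importance_sampling_variance_bound_pattern_groups
    (n : ℕ) (hn : 1 ≤ n) (F : Type) [Field F] [Fintype F]
    (i j : Fin n) (hij : i < j)
    (H H' : Subgroup (GL (Fin n) F))
    (hH : ∀ g : GL (Fin n) F, g ∈ H ↔
      (g : Matrix (Fin n) (Fin n) F) ∈ patternSet n F (Jset n i j))
    (hH' : ∀ g : GL (Fin n) F, g ∈ H' ↔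
      (g : Matrix (Fin n) (Fin n) F) ∈ patternSet n F (Jset n i j \ {(i, j)}))
    (K : H → ℚ)
    (hK : ∀ g : H, K g = if hg : (g : GL (Fin n) F) ∈ H' then
        (Nat.card (Subgroup.centralizer {(⟨(g : GL (Fin n) F), hg⟩ : H')} : Subgroup H') : ℚ) /
          (Nat.card (Subgroup.centralizer {g} : Subgroup H) : ℚ)
      else 0)
    (E₁ E₂ : ℚ)
    (hE₁ : E₁ = ∑ g : H, ((Fintype.card F : ℚ) * K g) /
      ((Nat.card (ConjClasses H) : ℚ) * (Nat.card (ConjClasses.mk g).carrier : ℚ)))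
    (hE₂ : E₂ = ∑ g : H, ((Fintype.card F : ℚ) * K g) ^ 2 /
      ((Nat.card (ConjClasses H) : ℚ) * (Nat.card (ConjClasses.mk g).carrier : ℚ))) :
    E₂ - E₁ ^ 2 ≤ (Fintype.card F : ℚ) ^ 4 * E₁ ^ 2 ∧
    E₁ = (Nat.card (ConjClasses H') : ℚ) / (Nat.card (ConjClasses H) : ℚ) := by
  classical
  set q : ℕ := Fintype.card F with hq
  set k : ℕ := Nat.card (ConjClasses ↥H) with hk
  set k' : ℕ := Nat.card (ConjClasses ↥H') with hk'
  -- H' ≤ H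
  have hle : H' ≤ H := fun g hg => (hH g).mpr (pat_le ((hH' g).mp hg))
  -- the entry homomorphism
  let φ : ↥H →* Multiplicative F :=
    { toFun := fun g => Multiplicative.ofAdd
        (((g : GL (Fin n) F) : Matrix (Fin n) (Fin n) F) i j)
      map_one' := by
        show Multiplicative.ofAdd ((((1 : ↥H) : GL (Fin n) F) : Matrix (Fin n) (Fin n) F) i j)
          = 1
        rw [show (((1 : ↥H) : GL (Fin n) F) : Matrix (Fin n) (Fin n) F) i j = 0 from by
          simp only [OneMemClass.coe_one, Units.val_one]; exact Matrix.one_apply_ne hij.ne]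
        rfl
      map_mul' := fun g h => by
        have hadd := pat_entry_add hij ((hH _).mp g.2) ((hH _).mp h.2)
        show Multiplicative.ofAdd ((((g * h : ↥H) : GL (Fin n) F) : Matrix (Fin n) (Fin n) F) i j)
          = Multiplicative.ofAdd (((g : GL (Fin n) F) : Matrix (Fin n) (Fin n) F) i j)
            * Multiplicative.ofAdd (((h : GL (Fin n) F) : Matrix (Fin n) (Fin n) F) i j)
        rw [Subgroup.coe_mul, Units.val_mul, hadd]
        rfl }
    -- membership characterization
  have hmemH' : ∀ g : ↥H, ((g : GL (Fin n) F) ∈ H' ↔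
      ((g : GL (Fin n) F) : Matrix (Fin n) (Fin n) F) i j = 0) := by
    intro g
    rw [hH' _]
    exact pat_mem_iff hij ((hH _).mp g.2)
  have hker : φ.ker = H'.subgroupOf H := by
    ext g
    rw [MonoidHom.mem_ker, Subgroup.mem_subgroupOf, hmemH' g]
    constructor
    · intro hgk
      have := congrArg Multiplicative.toAdd hgk
      exact this
    · intro h0
      show Multiplicative.ofAdd (((g : GL (Fin n) F) : Matrix (Fin n) (Fin n) F) i j) = 1
      rw [h0]; rfl
  haveI hnorm : (H'.subgroupOf H).Normal := hker ▸ MonoidHom.normal_ker φ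
  have hsurj : Function.Surjective φ := by
    intro t
    obtain ⟨g, hg, hgt⟩ := pat_exists hij (Multiplicative.toAdd t)
    refine ⟨⟨g, (hH g).mpr hg⟩, ?_⟩
    show Multiplicative.ofAdd ((g : Matrix (Fin n) (Fin n) F) i j) = t
    rw [hgt]
    simp
  have hindex : (H'.subgroupOf H).index = q := by
    rw [← hker, Subgroup.index_ker, MonoidHom.range_eq_top.mpr hsurj]
    rw [Nat.card_congr Subgroup.topEquiv.toEquiv]
    rw [Nat.card_congr Multiplicative.toAdd, Nat.card_eq_fintype_card]
  have e : ↥(H'.subgroupOf H) ≃* ↥H' := Subgroup.subgroupOfEquivOfLe hle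
  have hcardN : Nat.card ↥(H'.subgroupOf H) = Nat.card ↥H' := Nat.card_congr e.toEquiv
  have hkN : Nat.card (ConjClasses ↥(H'.subgroupOf H)) = k' := myConjClassesCard e
  have hcardH : Nat.card ↥H = q * Nat.card ↥H' := by
    rw [← Subgroup.card_mul_index (H'.subgroupOf H), hindex, hcardN, mul_comm]
  have hkey : k ≤ q * k' := by
    have := myClassBound (H'.subgroupOf H)
    rwa [hindex, hkN] at this
  -- positivity
  have hk0 : 0 < k := Nat.card_pos
  have hk'0 : 0 < k' := Nat.card_pos
  have hq0 : 0 < q := Fintype.card_pos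
  have hH'0 : 0 < Nat.card ↥H' := Nat.card_pos
  -- the auxiliary function
  obtain ⟨cfun, hcpos, hcneg⟩ : ∃ c : ↥H → ℚ,
      (∀ (g : ↥H) (hg : (g : GL (Fin n) F) ∈ H'), c g =
        (Nat.card (Subgroup.centralizer {(⟨(g : GL (Fin n) F), hg⟩ : H')} : Subgroup H') : ℚ)) ∧
      (∀ g : ↥H, (g : GL (Fin n) F) ∉ H' → c g = 0) :=
    ⟨fun g => if hg : (g : GL (Fin n) F) ∈ H' then
      (Nat.card (Subgroup.centralizer {(⟨(g : GL (Fin n) F), hg⟩ : H')} : Subgroup H') : ℚ)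
      else 0, fun g hg => dif_pos hg, fun g hg => dif_neg hg⟩
  have arith : ∀ qq cc CC kk OO : ℚ, CC ≠ 0 →
      qq * (cc / CC) / (kk * OO) = qq * cc / (kk * (OO * CC)) := by
    intro qq cc CC kk OO hCC
    field_simp
  -- per-term rewrite
  have hterm : ∀ g : ↥H, (q : ℚ) * K g /
      ((k : ℚ) * (Nat.card (ConjClasses.mk g).carrier : ℚ))
      = (q : ℚ) * cfun g / ((k : ℚ) * (Nat.card ↥H : ℚ)) := by
    intro g
    have hOC := myOrbitCentralizer ↥H g
    have hcne : ((ConjClasses.mk g).carrier).Nonempty := ⟨g, ConjClasses.mem_carrier_mk⟩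
    haveI := hcne.to_subtype
    have hO0 : (0:ℚ) < (Nat.card (ConjClasses.mk g).carrier : ℚ) := by
      exact_mod_cast Nat.card_pos
    have hC0 : (0:ℚ) < (Nat.card (Subgroup.centralizer {g} : Subgroup ↥H) : ℚ) := by
      exact_mod_cast Nat.card_pos
    have hHq : (Nat.card ↥H : ℚ) = (Nat.card (ConjClasses.mk g).carrier : ℚ) *
        (Nat.card (Subgroup.centralizer {g} : Subgroup ↥H) : ℚ) := by
      exact_mod_cast (congrArg (Nat.cast (R := ℚ)) hOC).symm
    have hkQ : (0:ℚ) < (k:ℚ) := by exact_mod_cast hk0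
    rw [hK g]
    by_cases hg : (g : GL (Fin n) F) ∈ H'
    · rw [dif_pos hg, hcpos g hg, hHq, arith _ _ _ _ _ hC0.ne']
    · rw [dif_neg hg, hcneg g hg, mul_zero, zero_div, zero_div]
  -- the sum of cfun
  have hsum : ∑ g : ↥H, cfun g = ((k' * Nat.card ↥H' : ℕ) : ℚ) := by
    have h1 : ∑ g : ↥H, cfun g
        = ∑ g ∈ Finset.univ.filter (fun g : ↥H => (g : GL (Fin n) F) ∈ H'), cfun g := by
      refine (Finset.sum_filter_of_ne ?_).symm
      intro g _ hne
      by_contra hmem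
      exact hne (hcneg g hmem)
    have h2 : ∑ g ∈ Finset.univ.filter (fun g : ↥H => (g : GL (Fin n) F) ∈ H'), cfun g
        = ∑ h : ↥H', (Nat.card (Subgroup.centralizer {h} : Subgroup ↥H') : ℚ) := by
      refine Finset.sum_bij
        (i := fun g hg => (⟨(g : GL (Fin n) F), (Finset.mem_filter.mp hg).2⟩ : ↥H'))
        (fun _ _ => Finset.mem_univ _) ?_ ?_ ?_
      · intro a ha b hb hab
        simpa using hab
      · intro h _
        refine ⟨⟨(h : GL (Fin n) F), hle h.2⟩, ?_, ?_⟩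
        · exact Finset.mem_filter.mpr ⟨Finset.mem_univ _, h.2⟩
        · exact Subtype.ext rfl
      · intro g hg
        exact hcpos g (Finset.mem_filter.mp hg).2
    rw [h1, h2, ← Nat.cast_sum]
    exact_mod_cast congrArg (Nat.cast (R := ℚ)) (myBurnside ↥H')
  -- E₁ computation
  have hE₁' : E₁ = (k' : ℚ) / (k : ℚ) := by
    rw [hE₁]
    calc ∑ g : ↥H, (q : ℚ) * K g /
          ((k : ℚ) * (Nat.card (ConjClasses.mk g).carrier : ℚ))
        = ∑ g : ↥H, (q : ℚ) * cfun g / ((k : ℚ) * (Nat.card ↥H : ℚ)) :=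
          Finset.sum_congr rfl fun g _ => hterm g
      _ = (q : ℚ) * (∑ g : ↥H, cfun g) / ((k : ℚ) * (Nat.card ↥H : ℚ)) := by
          rw [Finset.mul_sum, Finset.sum_div]
      _ = (k' : ℚ) / (k : ℚ) := by
          rw [hsum, hcardH]
          have hq0' : (q:ℚ) ≠ 0 := by
            have : (0:ℚ) < (q:ℚ) := by exact_mod_cast hq0
            exact this.ne'
          have hH'0' : ((Nat.card ↥H' : ℚ)) ≠ 0 := by
            have : (0:ℚ) < (Nat.card ↥H' : ℚ) := by exact_mod_cast hH'0
            exact this.ne'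
          have hk0' : (k:ℚ) ≠ 0 := by
            have : (0:ℚ) < (k:ℚ) := by exact_mod_cast hk0
            exact this.ne'
          push_cast
          field_simp
  refine ⟨?_, by rw [hE₁', hk, hk']⟩
  -- variance bound
  have hK0 : ∀ g : ↥H, 0 ≤ K g := by
    intro g
    rw [hK g]
    by_cases hg : (g : GL (Fin n) F) ∈ H'
    · rw [dif_pos hg]; positivity
    · rw [dif_neg hg]
  have hK1 : ∀ g : ↥H, K g ≤ 1 := by
    intro g
    rw [hK g]
    by_cases hg : (g : GL (Fin n) F) ∈ H'
    · rw [dif_pos hg]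
      set x : ↥H' := ⟨(g : GL (Fin n) F), hg⟩
      have hinj : Nat.card (Subgroup.centralizer {x} : Subgroup ↥H')
          ≤ Nat.card (Subgroup.centralizer {g} : Subgroup ↥H) := by
        refine Nat.card_le_card_of_injective
          (fun y => ⟨⟨((y : ↥H') : GL (Fin n) F), hle (y : ↥H').2⟩, ?_⟩) ?_
        · rw [Subgroup.mem_centralizer_iff]
          rintro b rfl
          have hy := Subgroup.mem_centralizer_iff.mp y.2 x rfl
          have : (x : GL (Fin n) F) * ((y : ↥H') : GL (Fin n) F)
              = ((y : ↥H') : GL (Fin n) F) * (x : GL (Fin n) F) := by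
            exact_mod_cast congrArg Subtype.val hy
          exact Subtype.ext this
        · intro y z hyz
          simpa using hyz
      have hC0 : (0:ℚ) < (Nat.card (Subgroup.centralizer {g} : Subgroup ↥H) : ℚ) := by
        exact_mod_cast Nat.card_pos
      exact div_le_one_of_le₀ (by exact_mod_cast hinj) hC0.le
    · rw [dif_neg hg]; norm_num
  have hE₂le : E₂ ≤ (q : ℚ) * E₁ := by
    rw [hE₂, hE₁, Finset.mul_sum]
    refine Finset.sum_le_sum fun g _ => ?_
    have hcne : ((ConjClasses.mk g).carrier).Nonempty := ⟨g, ConjClasses.mem_carrier_mk⟩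
    haveI := hcne.to_subtype
    have hD0 : (0:ℚ) < (k : ℚ) * (Nat.card (ConjClasses.mk g).carrier : ℚ) := by
      have h1 : (0:ℚ) < (k:ℚ) := by exact_mod_cast hk0
      have h2 : (0:ℚ) < (Nat.card (ConjClasses.mk g).carrier : ℚ) := by
        exact_mod_cast Nat.card_pos
      positivity
    have h1 : (0:ℚ) ≤ (q:ℚ) * K g := by
      have h3 := hK0 g
      have h4 : (0:ℚ) ≤ (q:ℚ) := by positivity
      positivity
    have h2 : (q:ℚ) * K g ≤ (q:ℚ) := by
      have := hK1 g
      calc (q:ℚ) * K g ≤ (q:ℚ) * 1 :=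
            mul_le_mul_of_nonneg_left this (by positivity)
        _ = (q:ℚ) := mul_one _
    rw [← mul_div_assoc]
    refine (div_le_div_iff_of_pos_right hD0).mpr ?_
    calc ((q:ℚ) * K g) ^ 2 = ((q:ℚ) * K g) * ((q:ℚ) * K g) := sq _
      _ ≤ (q:ℚ) * ((q:ℚ) * K g) := mul_le_mul_of_nonneg_right h2 h1
  have hqE1 : 1 ≤ (q : ℚ) * E₁ := by
    rw [hE₁', ← mul_div_assoc, le_div_iff₀ (by exact_mod_cast hk0 : (0:ℚ) < (k:ℚ)), one_mul]
    exact_mod_cast hkey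
  have hq1 : (1:ℚ) ≤ (q:ℚ) := by exact_mod_cast hq0
  have hE1pos : 0 < E₁ := by
    rw [hE₁']
    have h1 : (0:ℚ) < (k':ℚ) := by exact_mod_cast hk'0
    have h2 : (0:ℚ) < (k:ℚ) := by exact_mod_cast hk0
    positivity
  nlinarith [mul_le_mul hqE1 hqE1 (by norm_num) (by positivity : (0:ℚ) ≤ (q:ℚ) * E₁),
    sq_nonneg E₁, mul_le_mul_of_nonneg_right hq1 (le_of_lt hE1pos),
    mul_le_mul_of_nonneg_left hqE1 (by positivity : (0:ℚ) ≤ (q:ℚ)^3 * E₁)]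
end

section
/- Let a finite group G act on a finite nonempty set X. For g ∈ G let X_g = {y ∈ X : y·g = y} and for x ∈ X let G_x = {h ∈ G : x·h = x}, and let O(x) denote the orbit of x. Define the Burnside process transition kernel K(x,y) = Σ_{g ∈ G_x ∩ G_y} 1/(|X_g|·|G_x|) and the probability distribution π(x) = z^{-1}/|O(x)| where z is the number of orbits. Then the kernel K is reversible with respect to π: for all x, y ∈ X, π(x)·K(x,y) = π(y)·K(y,x). -/
/- STATEMENT 4: the Burnside process kernel
`K(x,y) = Σ_{g ∈ G_x ∩ G_y} 1/(|X_g|·|G_x|)` is reversible with respect to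
`π(x) = z⁻¹/|O(x)|`, where `z` is the number of orbits:
`π(x)·K(x,y) = π(y)·K(y,x)` for all `x, y`. -/
private lemma burnside_aux (z f a b c d g : ℚ) (ha : a ≠ 0) (hb : b ≠ 0) (hc : c ≠ 0) (hd : d ≠ 0) (hf : f ≠ 0)
    (hab : a * b = g) (hcd : c * d = g) :
    z⁻¹ / a * (f * b)⁻¹ = z⁻¹ / c * (f * d)⁻¹ := by
  have e1 : z⁻¹ / a * (f * b)⁻¹ = z⁻¹ * (f * (a * b))⁻¹ := by
    rw [mul_inv, mul_inv, div_eq_mul_inv]; ring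
  have e2 : z⁻¹ / c * (f * d)⁻¹ = z⁻¹ * (f * (c * d))⁻¹ := by
    rw [mul_inv, mul_inv, div_eq_mul_inv]; ring
  rw [e1, e2, hab, hcd]

open scoped Classical in
theorem burnside_process_reversible
    {X G : Type*} [Fintype X] [Nonempty X] [Group G] [Fintype G] [MulAction G X]
    (K : X → X → ℚ) (π : X → ℚ)
    (hK : ∀ x y : X, K x y = ∑ g : G,
      if g • x = x ∧ g • y = y then
        ((Nat.card (MulAction.fixedBy X g) : ℚ) * (Nat.card (MulAction.stabilizer G x) : ℚ))⁻¹
      else 0)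
    (hπ : ∀ x : X, π x = ((Nat.card (MulAction.orbitRel.Quotient G X) : ℚ))⁻¹ /
      (Nat.card (MulAction.orbit G x) : ℚ))
    (x y : X) :
    π x * K x y = π y * K y x := by
  have key : ∀ a : X, (Nat.card (MulAction.orbit G a) : ℚ) *
      (Nat.card (MulAction.stabilizer G a) : ℚ) = (Nat.card G : ℚ) := by
    intro a
    have h := Nat.card_congr (MulAction.orbitProdStabilizerEquivGroup G a)
    rw [Nat.card_prod] at h
    exact_mod_cast h
  have horb : ∀ a : X, (Nat.card (MulAction.orbit G a) : ℚ) ≠ 0 := by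
    intro a
    have : Nat.card (MulAction.orbit G a) ≠ 0 :=
      Nat.card_ne_zero.mpr ⟨⟨a, MulAction.mem_orbit_self a⟩, Set.finite_coe_iff.mpr (Set.toFinite _)⟩
    exact_mod_cast this
  rw [hK, hK, hπ, hπ, Finset.mul_sum, Finset.mul_sum]
  refine Finset.sum_congr rfl fun g _ => ?_
  by_cases h : g • x = x ∧ g • y = y
  · rw [if_pos h, if_pos ⟨h.2, h.1⟩]
    have hx := horb x
    have hy := horb y
    have kx := key x
    have ky := key y
    have hfix : (Nat.card (MulAction.fixedBy X g) : ℚ) ≠ 0 := by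
      have : Nat.card (MulAction.fixedBy X g) ≠ 0 :=
        Nat.card_ne_zero.mpr ⟨⟨x, h.1⟩, Set.finite_coe_iff.mpr (Set.toFinite _)⟩
      exact_mod_cast this
    have hsx : (Nat.card (MulAction.stabilizer G x) : ℚ) ≠ 0 := by
      have : Nat.card (MulAction.stabilizer G x) ≠ 0 := Nat.card_ne_zero.mpr ⟨⟨1, by simp⟩, inferInstance⟩
      exact_mod_cast this
    have hsy : (Nat.card (MulAction.stabilizer G y) : ℚ) ≠ 0 := by
      have : Nat.card (MulAction.stabilizer G y) ≠ 0 := Nat.card_ne_zero.mpr ⟨⟨1, by simp⟩, inferInstance⟩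
      exact_mod_cast this
    exact burnside_aux _ _ _ _ _ _ _ hx hsx hy hsy hfix kx ky
  · rw [if_neg h, if_neg (fun hc => h ⟨hc.2, hc.1⟩), mul_zero, mul_zero]
end

section
/- Let a finite group G act on a finite nonempty set X. For g ∈ G let X_g = {y ∈ X : y·g = y} and for x ∈ X let G_x = {h ∈ G : x·h = x}. Define K(x,y) = Σ_{g ∈ G_x ∩ G_y} 1/(|X_g|·|G_x|). Then K is a stochastic matrix: for every x ∈ X, Σ_{y ∈ X} K(x,y) = 1. -/
/- STATEMENT 5: the Burnside process kernel
`K(x,y) = Σ_{g ∈ G_x ∩ G_y} 1/(|X_g|·|G_x|)` is a stochastic matrix: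
for every `x`, `Σ_y K(x,y) = 1`. -/
open scoped Classical in
theorem burnside_process_stochastic
    {X G : Type*} [Fintype X] [Nonempty X] [Group G] [Fintype G] [MulAction G X]
    (K : X → X → ℚ)
    (hK : ∀ x y : X, K x y = ∑ g : G,
      if g • x = x ∧ g • y = y then
        ((Nat.card (MulAction.fixedBy X g) : ℚ) * (Nat.card (MulAction.stabilizer G x) : ℚ))⁻¹
      else 0)
    (x : X) :
    ∑ y : X, K x y = 1 := by
  classical
  have hstab : (Nat.card (MulAction.stabilizer G x) : ℚ) ≠ 0 := by
    have : 0 < Nat.card (MulAction.stabilizer G x) := Nat.card_pos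
    exact_mod_cast this.ne'
  simp only [hK]
  rw [Finset.sum_comm]
  have h1 : ∀ g : G, (∑ y : X, if g • x = x ∧ g • y = y then
      ((Nat.card (MulAction.fixedBy X g) : ℚ) * (Nat.card (MulAction.stabilizer G x) : ℚ))⁻¹
      else 0) = if g • x = x then (Nat.card (MulAction.stabilizer G x) : ℚ)⁻¹ else 0 := by
    intro g
    by_cases hg : g • x = x
    · simp only [hg, true_and, if_true]
      rw [← Finset.sum_filter, Finset.sum_const, nsmul_eq_mul]
      have hcard : (Finset.univ.filter fun y : X => g • y = y).card
          = Nat.card (MulAction.fixedBy X g) := by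
        rw [Nat.card_coe_set_eq, Set.ncard_eq_toFinset_card']
        congr 1
        ext y
        simp [MulAction.mem_fixedBy]
      have hfix : (Nat.card (MulAction.fixedBy X g) : ℚ) ≠ 0 := by
        have : x ∈ MulAction.fixedBy X g := hg
        have : 0 < Nat.card (MulAction.fixedBy X g) :=
          Nat.card_pos_iff.mpr ⟨⟨x, this⟩, Set.Finite.to_subtype (Set.toFinite _)⟩
        exact_mod_cast this.ne'
      rw [hcard, mul_inv, ← mul_assoc, mul_inv_cancel₀ hfix, one_mul]
    · simp [hg]
  rw [Finset.sum_congr rfl fun g _ => h1 g]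
  rw [← Finset.sum_filter, Finset.sum_const, nsmul_eq_mul]
  have hcard : (Finset.univ.filter fun g : G => g • x = x).card
      = Nat.card (MulAction.stabilizer G x) := by
    rw [Nat.card_eq_fintype_card, Fintype.card_subtype]
    congr 1
  rw [hcard, mul_inv_cancel₀ hstab]
end
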